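/- arXiv:1908.04232 — 7 statements merged into one kernel-verified Lean document; each statement's English description precedes it below -/
import Mathlib

section
/- For any angle θ with |θ| ≤ π and any positive integer T, the quantity p(θ) = |Σ_{t=0}^{T−1} e^{itθ}|² / T² satisfies p(θ) ≥ 1 − T²θ²/8. -/
lemma sum_id_real (n : ℕ) : ∑ t ∈ Finset.range n, (t : ℝ) = n * (n - 1) / 2 := by
  induction n with
  | zero => simp
  | succ k ih => rw [Finset.sum_range_succ, ih]; push_cast; ring

lemma sum_sq_real (n : ℕ) : ∑ t ∈ Finset.range n, (t : ℝ) ^ 2 = n * (n - 1) * (2 * n - 1) / 6 := by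
  induction n with
  | zero => simp
  | succ k ih => rw [Finset.sum_range_succ, ih]; push_cast; ring

lemma double_sum_sq (T : ℕ) :
    ∑ t ∈ Finset.range T, ∑ s ∈ Finset.range T, ((t : ℝ) - s) ^ 2
      = (T : ℝ) ^ 2 * ((T : ℝ) ^ 2 - 1) / 6 := by
  have h : ∀ t s : ℕ, ((t : ℝ) - s) ^ 2 = (t : ℝ) ^ 2 - 2 * t * s + (s : ℝ) ^ 2 := by
    intro t s; ring
  simp only [h, Finset.sum_add_distrib, Finset.sum_sub_distrib, Finset.sum_const,
    Finset.card_range, nsmul_eq_mul, ← Finset.mul_sum, ← Finset.sum_mul, sum_id_real, sum_sq_real]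
  ring

/-- For `|θ| ≤ π` and a positive integer `T`, the phase-estimation acceptance probability
`p(θ) = |Σ_{t<T} e^{itθ}|²/T²` satisfies `p(θ) ≥ 1 − T²θ²/8`. -/
theorem stmt4 (θ : ℝ) (hθ : |θ| ≤ Real.pi) (T : ℕ) (hT : 1 ≤ T) :
    1 - (T : ℝ) ^ 2 * θ ^ 2 / 8 ≤
      ‖∑ t ∈ Finset.range T, Complex.exp ((t : ℂ) * (θ : ℂ) * Complex.I)‖ ^ 2
        / (T : ℝ) ^ 2 := by
  set S := ∑ t ∈ Finset.range T, Complex.exp ((t : ℂ) * (θ : ℂ) * Complex.I) with hS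
  have hterm : ∀ t : ℕ, ((t : ℂ) * (θ : ℂ) * Complex.I) = ((t * θ : ℝ) : ℂ) * Complex.I := by
    intro t; push_cast; ring
  have hre : S.re = ∑ t ∈ Finset.range T, Real.cos (t * θ) := by
    rw [hS, Complex.re_sum]
    refine Finset.sum_congr rfl fun t _ => ?_
    rw [hterm t, Complex.exp_ofReal_mul_I_re]
  have him : S.im = ∑ t ∈ Finset.range T, Real.sin (t * θ) := by
    rw [hS, Complex.im_sum]
    refine Finset.sum_congr rfl fun t _ => ?_
    rw [hterm t, Complex.exp_ofReal_mul_I_im]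
  have habs : ‖S‖ ^ 2 =
      (∑ t ∈ Finset.range T, Real.cos (t * θ)) ^ 2 +
      (∑ t ∈ Finset.range T, Real.sin (t * θ)) ^ 2 := by
    rw [Complex.sq_norm, Complex.normSq_apply, hre, him]; ring
  have hdouble : (∑ t ∈ Finset.range T, Real.cos (t * θ)) ^ 2 +
      (∑ t ∈ Finset.range T, Real.sin (t * θ)) ^ 2 =
      ∑ t ∈ Finset.range T, ∑ s ∈ Finset.range T, Real.cos ((t : ℝ) * θ - s * θ) := by
    rw [sq, sq, Finset.sum_mul_sum, Finset.sum_mul_sum, ← Finset.sum_add_distrib]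
    refine Finset.sum_congr rfl fun t _ => ?_
    rw [← Finset.sum_add_distrib]
    refine Finset.sum_congr rfl fun s _ => ?_
    rw [Real.cos_sub]
  have hlb : ∑ t ∈ Finset.range T, ∑ s ∈ Finset.range T, Real.cos ((t : ℝ) * θ - s * θ)
      ≥ ∑ t ∈ Finset.range T, ∑ s ∈ Finset.range T, (1 - ((t : ℝ) * θ - s * θ) ^ 2 / 2) := by
    refine Finset.sum_le_sum fun t _ => Finset.sum_le_sum fun s _ => ?_
    exact Real.one_sub_sq_div_two_le_cos
  have heval : ∑ t ∈ Finset.range T, ∑ s ∈ Finset.range T, (1 - ((t : ℝ) * θ - s * θ) ^ 2 / 2)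
      = (T : ℝ) ^ 2 - θ ^ 2 / 2 * ((T : ℝ) ^ 2 * ((T : ℝ) ^ 2 - 1) / 6) := by
    have h : ∀ t s : ℕ, (1 - ((t : ℝ) * θ - s * θ) ^ 2 / 2)
        = 1 - θ ^ 2 / 2 * ((t : ℝ) - s) ^ 2 := by intro t s; ring
    simp only [h, Finset.sum_sub_distrib, Finset.sum_const, Finset.card_range, nsmul_eq_mul,
      ← Finset.mul_sum, double_sum_sq]
    push_cast; ring
  have hT0 : (0 : ℝ) < (T : ℝ) ^ 2 := by positivity
  rw [le_div_iff₀ hT0]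
  have hθ2 : (0 : ℝ) ≤ θ ^ 2 := sq_nonneg θ
  have hT1 : (1 : ℝ) ≤ (T : ℝ) := by exact_mod_cast hT
  nlinarith [habs, hdouble, hlb, heval, sq_nonneg ((T:ℝ)^2), sq_nonneg ((T:ℝ)*θ),
    mul_nonneg hθ2 (sq_nonneg (T:ℝ))]
end

section
/- Let U be a unitary on a finite-dimensional complex Hilbert space with eigendecomposition U = Σ_j e^{iθ_j} |λ_j⟩⟨λ_j| where θ_j ∈ (−π, π]. Let Π_Θ be the projector onto eigenvectors with |θ_j| ≤ Θ for some Θ ∈ (0, π). Then the vector v = (I − U†)⁺ (I − Π_Θ)ψ (Moore–Penrose pseudoinverse applied to the component of ψ outside the small-phase eigenspaces) satisfies ‖v‖² ≤ π²/(4Θ²) · ‖ψ‖² for any unit vector ψ. -/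
set_option maxHeartbeats 1000000


open scoped ComplexInnerProductSpace

/-- If `U` is unitary, `Π_Θ` projects onto the eigenvectors of `U` with eigenphase
`|θ| ≤ Θ`, and `v = (I − U†)⁺(I − Π_Θ)ψ` (characterized as the solution of
`(I − U†)v = (I − Π_Θ)ψ` orthogonal to `ker(I − U†)`), then
`‖v‖² ≤ π²/(4Θ²)·‖ψ‖²` for any unit vector `ψ`. -/
theorem stmt6 {H : Type*} [NormedAddCommGroup H] [InnerProductSpace ℂ H]
    [FiniteDimensional ℂ H]
    (U : H →ₗ[ℂ] H) (hU : ∀ x y : H, ⟪U x, U y⟫ = ⟪x, y⟫)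
    (Θ : ℝ) (hΘ : 0 < Θ) (hΘ' : Θ < Real.pi)
    (EΘ : Submodule ℂ H)
    (hE : EΘ = ⨆ θ : ℝ, ⨆ _ : |θ| ≤ Θ,
      Module.End.eigenspace U (Complex.exp ((θ : ℂ) * Complex.I)))
    (ψ v : H) (hψ : ‖ψ‖ = 1)
    (hv : (LinearMap.id - LinearMap.adjoint U : H →ₗ[ℂ] H) v = ψ - (Submodule.orthogonalProjection EΘ ψ : H))
    (hv' : ∀ z : H, (LinearMap.id - LinearMap.adjoint U : H →ₗ[ℂ] H) z = 0 → ⟪z, v⟫ = 0) :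
    ‖v‖ ^ 2 ≤ Real.pi ^ 2 / (4 * Θ ^ 2) * ‖ψ‖ ^ 2 := by
  set Ud := LinearMap.adjoint U with hUd
  have hUU : ∀ x : H, Ud (U x) = x := by
    intro x
    apply ext_inner_left ℂ
    intro y
    rw [hUd, LinearMap.adjoint_inner_right, hU]
  have hUUd : ∀ x : H, U (Ud x) = x := by
    have h1 : Ud * U = 1 := by ext x; exact hUU x
    have h2 : U * Ud = 1 := mul_eq_one_comm.mpr h1
    intro x; exact congrFun (congrArg DFunLike.coe h2) x
  have hnU : ∀ y : H, ‖U y‖ = ‖y‖ := by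
    intro y
    rw [@norm_eq_sqrt_re_inner ℂ _ _ _ _ (U y), @norm_eq_sqrt_re_inner ℂ _ _ _ _ y, hU y y]
  have hnUd : ∀ x : H, ‖Ud x‖ = ‖x‖ := by
    intro x
    have h : ⟪Ud x, Ud x⟫ = ⟪x, x⟫ := by
      conv_lhs => rw [hUd, LinearMap.adjoint_inner_left, ← hUd, hUUd]
    rw [@norm_eq_sqrt_re_inner ℂ _ _ _ _ (Ud x), @norm_eq_sqrt_re_inner ℂ _ _ _ _ x, h]
  -- invariance of EΘ under U and Ud
  have hEgen : ∀ (W : H →ₗ[ℂ] H), (∀ (ν : ℂ) (x : H), U x = ν • x → U (W x) = ν • W x) →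
      ∀ x ∈ EΘ, W x ∈ EΘ := by
    intro W hW x hx
    have : Submodule.map W EΘ ≤ EΘ := by
      conv_lhs => rw [hE]
      rw [hE]
      simp_rw [Submodule.map_iSup]
      refine iSup_le fun θ => iSup_le fun hθ => le_iSup_of_le θ (le_iSup_of_le hθ ?_)
      rw [Submodule.map_le_iff_le_comap]
      intro y hy
      rw [Module.End.mem_eigenspace_iff] at hy
      exact Module.End.mem_eigenspace_iff.mpr (hW _ y hy)
    exact this ⟨x, hx, rfl⟩
  have hEU : ∀ x ∈ EΘ, U x ∈ EΘ :=
    hEgen U fun ν x h => by rw [h, map_smul, h]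
  have hEUd : ∀ x ∈ EΘ, Ud x ∈ EΘ := by
    refine hEgen Ud fun ν x h => ?_
    rw [hUUd x]
    have h2 : Ud (U x) = ν • Ud x := by rw [h, map_smul]
    rw [hUU x] at h2
    rw [← h2]
  ------------------------------------------------------------------
  -- Step B : v ∈ EΘᗮ
  ------------------------------------------------------------------
  set T : H →ₗ[ℂ] H := LinearMap.id - LinearMap.adjoint U with hT
  have hTapp : ∀ x : H, T x = x - Ud x := by
    intro x; simp [hT, hUd, LinearMap.sub_apply]
  set w : H := ψ - (Submodule.orthogonalProjection EΘ ψ : H) with hw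
  have hwmem : w ∈ EΘᗮ := Submodule.sub_starProjection_mem_orthogonal (K := EΘ) ψ
  have hOrthUd : ∀ x ∈ EΘᗮ, Ud x ∈ EΘᗮ := by
    intro x hx
    rw [Submodule.mem_orthogonal] at hx ⊢
    intro u hu
    rw [hUd, LinearMap.adjoint_inner_right]
    exact hx (U u) (hEU u hu)
  have hvE : v ∈ EΘᗮ := by
    set p : H := (Submodule.orthogonalProjection EΘ v : H) with hp
    have hpmem : p ∈ EΘ := (Submodule.orthogonalProjection EΘ v).2
    set v₂ : H := v - p with hv₂
    have hv₂mem : v₂ ∈ EΘᗮ := Submodule.sub_starProjection_mem_orthogonal (K := EΘ) v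
    have hTp0 : T p = 0 := by
      have h1 : T p ∈ EΘ := by
        rw [hTapp]
        exact Submodule.sub_mem _ hpmem (hEUd p hpmem)
      have h2 : T p ∈ EΘᗮ := by
        have h3 : T p = w - T v₂ := by
          rw [← hv, hv₂, map_sub]; abel
        rw [h3]
        refine Submodule.sub_mem _ hwmem ?_
        rw [hTapp]
        exact Submodule.sub_mem _ hv₂mem (hOrthUd v₂ hv₂mem)
      have := (Submodule.mem_orthogonal _ _).mp h2 (T p) h1
      exact inner_self_eq_zero.mp this
    have hpv : ⟪p, v⟫ = 0 := hv' p hTp0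
    have hpp : ⟪p, p⟫ = 0 := by
      have h4 : ⟪p, v₂⟫ = 0 := (Submodule.mem_orthogonal _ _).mp hv₂mem p hpmem
      have hvv : v = p + v₂ := by rw [hv₂]; abel
      rw [hvv, inner_add_right, h4, add_zero] at hpv
      exact hpv
    have hp0 : p = 0 := inner_self_eq_zero.mp hpp
    have h5 : v = v₂ := by rw [hv₂, hp0, sub_zero]
    rw [h5]; exact hv₂mem
  ------------------------------------------------------------------
  -- Key subclaim : eigenvectors of U + Ud with eigenvalue 2μ > 2cos Θ lie in EΘ
  ------------------------------------------------------------------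
  have hkey : ∀ (μ : ℝ), Real.cos Θ < μ → ∀ x : H,
      (U + Ud) x = ((2 * μ : ℝ) : ℂ) • x → x ∈ EΘ := by
    intro μ hμΘ x hx
    have hle : ∀ θ : ℝ, |θ| ≤ Θ →
        Module.End.eigenspace U (Complex.exp ((θ : ℂ) * Complex.I)) ≤ EΘ := by
      intro θ hθ
      rw [hE]
      exact le_iSup_of_le θ (le_iSup_of_le hθ le_rfl)
    by_cases hx0 : x = 0
    · rw [hx0]; exact Submodule.zero_mem _
    have hμ1 : μ ≤ 1 := by
      have h1 : ‖((2 * μ : ℝ) : ℂ) • x‖ ≤ 2 * ‖x‖ := by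
        rw [← hx]
        calc ‖(U + Ud) x‖ ≤ ‖U x‖ + ‖Ud x‖ := by
              rw [LinearMap.add_apply]; exact norm_add_le _ _
        _ = 2 * ‖x‖ := by rw [hnU, hnUd]; ring
      rw [norm_smul] at h1
      simp only [Complex.norm_real, Real.norm_eq_abs] at h1
      have hxpos : 0 < ‖x‖ := norm_pos_iff.mpr hx0
      nlinarith [le_abs_self (2 * μ)]
    have hμlb : -1 ≤ μ := le_trans (Real.neg_one_le_cos Θ) (le_of_lt hμΘ)
    set θ₀ := Real.arccos μ with hθ₀def
    have hcosθ₀ : Real.cos θ₀ = μ := Real.cos_arccos hμlb hμ1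
    have hθ₀0 : 0 ≤ θ₀ := Real.arccos_nonneg μ
    have hθ₀π : θ₀ ≤ Real.pi := Real.arccos_le_pi μ
    have hθ₀Θ : θ₀ ≤ Θ := by
      by_contra hcon
      push_neg at hcon
      have := Real.cos_le_cos_of_nonneg_of_le_pi (le_of_lt hΘ) hθ₀π (le_of_lt hcon)
      rw [hcosθ₀] at this; linarith
    by_cases h0 : θ₀ = 0
    · -- μ = 1, show U x = x
      have hμeq : μ = 1 := by rw [← hcosθ₀, h0, Real.cos_zero]
      have hud : Ud x = (2 : ℂ) • x - U x := by
        have h := hx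
        rw [hμeq, LinearMap.add_apply] at h
        norm_num at h
        rw [eq_sub_iff_add_eq, add_comm]
        exact h
      have h1 : ⟪U x, x⟫ = ⟪x, Ud x⟫ := by rw [hUd, LinearMap.adjoint_inner_right]
      have hUx : U x = x := by
        have hz : ⟪U x - x, U x - x⟫ = 0 := by
          simp only [inner_sub_left, inner_sub_right, hU x x, h1, hud, inner_smul_right]
          ring
        have := inner_self_eq_zero.mp hz
        rwa [sub_eq_zero] at this
      refine hle 0 (by simpa using le_of_lt hΘ) ?_
      rw [Module.End.mem_eigenspace_iff]
      simp [hUx]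
    · have hθ₀pos : 0 < θ₀ := lt_of_le_of_ne hθ₀0 (Ne.symm h0)
      have hθ₀ltπ : θ₀ < Real.pi := lt_of_le_of_lt hθ₀Θ hΘ'
      set bb : ℂ := Complex.exp ((θ₀ : ℂ) * Complex.I) with hbb
      set aa : ℂ := Complex.exp (((-θ₀ : ℝ) : ℂ) * Complex.I) with haa
      have hab_add : aa + bb = ((2 * μ : ℝ) : ℂ) := by
        apply Complex.ext
        · rw [Complex.add_re, haa, hbb, Complex.exp_ofReal_mul_I_re,
            Complex.exp_ofReal_mul_I_re, Real.cos_neg, hcosθ₀, Complex.ofReal_re]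
          ring
        · rw [Complex.add_im, haa, hbb, Complex.exp_ofReal_mul_I_im,
            Complex.exp_ofReal_mul_I_im, Real.sin_neg, Complex.ofReal_im]
          ring
      have hab_mul : aa * bb = 1 := by
        rw [haa, hbb, ← Complex.exp_add]
        have h : ((-θ₀ : ℝ) : ℂ) * Complex.I + (θ₀ : ℂ) * Complex.I = 0 := by
          push_cast; ring
        rw [h, Complex.exp_zero]
      have hab_ne : aa ≠ bb := by
        intro hcon
        have h := congrArg Complex.im hcon
        rw [haa, hbb, Complex.exp_ofReal_mul_I_im, Complex.exp_ofReal_mul_I_im,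
          Real.sin_neg] at h
        have hs : 0 < Real.sin θ₀ := Real.sin_pos_of_pos_of_lt_pi hθ₀pos hθ₀ltπ
        linarith
      have hUUx : U (U x) + x = ((2 * μ : ℝ) : ℂ) • U x := by
        have h := congrArg U hx
        rw [LinearMap.add_apply, map_add, hUUd x, map_smul] at h
        exact h
      have hUUx' : U (U x) = ((2 * μ : ℝ) : ℂ) • U x - x := by
        rw [← hUUx]; abel
      set y : H := U x - aa • x with hy
      set z : H := U x - bb • x with hz
      have hyec : U y = bb • y := by
        have h2 : bb • y = bb • (U x) - x := by
          rw [hy, smul_sub, smul_smul, mul_comm bb aa, hab_mul, one_smul]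
        rw [h2, hy, map_sub, map_smul, hUUx', ← hab_add, add_smul]
        abel
      have hzec : U z = aa • z := by
        have h2 : aa • z = aa • (U x) - x := by
          rw [hz, smul_sub, smul_smul, hab_mul, one_smul]
        rw [h2, hz, map_sub, map_smul, hUUx', ← hab_add, add_smul]
        abel
      have hymem : y ∈ EΘ := by
        refine hle θ₀ (by rwa [abs_of_nonneg hθ₀0]) ?_
        exact Module.End.mem_eigenspace_iff.mpr hyec
      have hzmem : z ∈ EΘ := by
        refine hle (-θ₀) (by rwa [abs_neg, abs_of_nonneg hθ₀0]) ?_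
        exact Module.End.mem_eigenspace_iff.mpr hzec
      have hbma : bb - aa ≠ 0 := sub_ne_zero.mpr (Ne.symm hab_ne)
      have hxeq : x = (bb - aa)⁻¹ • (y - z) := by
        have h : y - z = (bb - aa) • x := by rw [hy, hz]; module
        rw [h, smul_smul, inv_mul_cancel₀ hbma, one_smul]
      rw [hxeq]
      exact Submodule.smul_mem _ _ (Submodule.sub_mem _ hymem hzmem)
  ------------------------------------------------------------------
  -- Step C : Rayleigh-type bound via the spectral theorem for U + Ud
  ------------------------------------------------------------------
  have hC : Complex.re ⟪(U + Ud) v, v⟫ ≤ 2 * Real.cos Θ * ‖v‖ ^ 2 := by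
    have hBsym : (U + Ud).IsSymmetric := by
      intro x y
      simp only [LinearMap.add_apply, inner_add_left, inner_add_right, hUd,
        LinearMap.adjoint_inner_left, LinearMap.adjoint_inner_right]
      ring
    have hAsym : ((2 : ℂ)⁻¹ • (U + Ud)).IsSymmetric :=
      hBsym.smul (by rw [map_inv₀, Complex.conj_ofNat])
    set A : H →ₗ[ℂ] H := (2 : ℂ)⁻¹ • (U + Ud) with hA
    set bas := hAsym.eigenvectorBasis rfl with hbas
    set μ : Fin (Module.finrank ℂ H) → ℝ := hAsym.eigenvalues rfl with hμ
    have hev : ∀ i, A (bas i) = ((μ i : ℝ) : ℂ) • bas i := fun i =>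
      hAsym.apply_eigenvectorBasis rfl i
    have hsum : ∀ i, (U + Ud) (bas i) = ((2 * μ i : ℝ) : ℂ) • bas i := by
      intro i
      have h := hev i
      rw [hA, LinearMap.smul_apply] at h
      have h2 := congrArg (fun w => (2 : ℂ) • w) h
      simp only [smul_smul] at h2
      norm_num at h2
      rw [LinearMap.add_apply, h2]
      norm_cast
    have hzero : ∀ i, Real.cos Θ < μ i → ⟪bas i, v⟫ = 0 := by
      intro i hi
      exact (Submodule.mem_orthogonal _ _).mp hvE (bas i) (hkey (μ i) hi (bas i) (hsum i))
    set c : Fin (Module.finrank ℂ H) → ℝ := fun i => ‖⟪bas i, v⟫‖ ^ 2 with hc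
    have hprod : ∀ i, ⟪v, bas i⟫ * ⟪bas i, v⟫ = ((c i : ℝ) : ℂ) := by
      intro i
      rw [← inner_conj_symm v (bas i), RCLike.conj_mul, hc]
      norm_cast
    have hnorm : ‖v‖ ^ 2 = ∑ i, c i := by
      have h := bas.sum_inner_mul_inner v v
      simp_rw [hprod, ← Complex.ofReal_sum] at h
      have h2 : ⟪v, v⟫ = ((‖v‖ ^ 2 : ℝ) : ℂ) := by
        rw [@inner_self_eq_norm_sq_to_K ℂ]; norm_cast
      rw [h2] at h
      exact_mod_cast h.symm
    have hBv : ⟪(U + Ud) v, v⟫ = ((∑ i, 2 * μ i * c i : ℝ) : ℂ) := by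
      have h := bas.sum_inner_mul_inner ((U + Ud) v) v
      rw [← h]
      have h3 : ∀ i, ⟪(U + Ud) v, bas i⟫ * ⟪bas i, v⟫ = ((2 * μ i * c i : ℝ) : ℂ) := by
        intro i
        rw [hBsym v (bas i), hsum i, inner_smul_right, mul_assoc, hprod i]
        push_cast
        ring
      simp_rw [h3, ← Complex.ofReal_sum]
    have htermwise : ∀ i, 2 * μ i * c i ≤ 2 * Real.cos Θ * c i := by
      intro i
      rcases le_or_gt (μ i) (Real.cos Θ) with h | h
      · have : 0 ≤ c i := by positivity
        nlinarith
      · have : c i = 0 := by rw [hc]; simp [hzero i h]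
        rw [this]; ring_nf; exact le_refl _
    rw [hBv, Complex.ofReal_re, hnorm, Finset.mul_sum]
    exact Finset.sum_le_sum fun i _ => htermwise i
  ------------------------------------------------------------------
  -- ‖T v‖² = 2‖v‖² − re⟪(U+Ud)v, v⟫
  ------------------------------------------------------------------
  have hTnorm : ‖T v‖ ^ 2 = 2 * ‖v‖ ^ 2 - Complex.re ⟪(U + Ud) v, v⟫ := by
    have h1 : ⟪v, Ud v⟫ = ⟪U v, v⟫ := by rw [hUd, LinearMap.adjoint_inner_right]
    have h2 : ⟪Ud v, v⟫ = ⟪v, U v⟫ := by rw [hUd, LinearMap.adjoint_inner_left]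
    have h3 : ⟪Ud v, Ud v⟫ = ⟪v, v⟫ := by
      conv_lhs => rw [hUd, LinearMap.adjoint_inner_left, ← hUd, hUUd]
    have h4 : ⟪T v, T v⟫ = 2 * ⟪v, v⟫ - ⟪(U + Ud) v, v⟫ := by
      rw [hTapp]
      simp only [inner_sub_left, inner_sub_right, LinearMap.add_apply, inner_add_left,
        h1, h2, h3]
      ring
    have h5 : ⟪T v, T v⟫ = ((‖T v‖ ^ 2 : ℝ) : ℂ) := by
      rw [@inner_self_eq_norm_sq_to_K ℂ]; norm_cast
    have h6 : ⟪v, v⟫ = ((‖v‖ ^ 2 : ℝ) : ℂ) := by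
      rw [@inner_self_eq_norm_sq_to_K ℂ]; norm_cast
    have h7 : ((‖T v‖ ^ 2 : ℝ) : ℂ) = 2 * ((‖v‖ ^ 2 : ℝ) : ℂ) - ⟪(U + Ud) v, v⟫ := by
      rw [← h5, ← h6, h4]
    have h8 := congrArg Complex.re h7
    rw [Complex.ofReal_re, Complex.sub_re] at h8
    have h9 : ((2 : ℂ) * ((‖v‖ ^ 2 : ℝ) : ℂ)).re = 2 * ‖v‖ ^ 2 := by
      have : (2 : ℂ) * ((‖v‖ ^ 2 : ℝ) : ℂ) = (((2 * ‖v‖ ^ 2 : ℝ)) : ℂ) := by push_cast; ring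
      rw [this, Complex.ofReal_re]
    rw [h9] at h8
    exact h8
  ------------------------------------------------------------------
  -- ‖T v‖ ≤ ‖ψ‖
  ------------------------------------------------------------------
  have hTle : ‖T v‖ ^ 2 ≤ ‖ψ‖ ^ 2 := by
    set q : H := (Submodule.orthogonalProjection EΘ ψ : H) with hqdef
    have hq : ψ = q + w := by rw [hw]; abel
    have horth : Complex.re ⟪q, w⟫ = 0 := by
      have := (Submodule.mem_orthogonal _ _).mp hwmem _ (Submodule.orthogonalProjection EΘ ψ).2
      rw [hqdef, this]; simp
    have hps : ‖q + w‖ ^ 2 = ‖q‖ ^ 2 + 2 * Complex.re ⟪q, w⟫ + ‖w‖ ^ 2 :=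
      @norm_add_sq ℂ _ _ _ _ q w
    have hqn : (0 : ℝ) ≤ ‖q‖ ^ 2 := by positivity
    rw [hv, hq, hps, horth]
    have : T v = w := hv
    nlinarith [hqn]
  ------------------------------------------------------------------
  -- numeric conclusion
  ------------------------------------------------------------------
  have hπ : 0 < Real.pi := Real.pi_pos
  have hcos : Real.cos Θ ≤ 1 - 2 / Real.pi ^ 2 * Θ ^ 2 :=
    Real.cos_le_one_sub_mul_cos_sq (by rw [abs_of_pos hΘ]; linarith)
  have hp2 : (0 : ℝ) < Real.pi ^ 2 := by positivity
  have hv2 : (0 : ℝ) ≤ ‖v‖ ^ 2 := by positivity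
  have h1 : (2 - 2 * Real.cos Θ) * ‖v‖ ^ 2 ≤ ‖T v‖ ^ 2 := by
    rw [hTnorm]
    nlinarith [hC]
  have hTψ : (2 - 2 * Real.cos Θ) * ‖v‖ ^ 2 ≤ ‖ψ‖ ^ 2 := le_trans h1 hTle
  have hcos2 : Real.pi ^ 2 * Real.cos Θ ≤ Real.pi ^ 2 - 2 * Θ ^ 2 := by
    have hmul := mul_le_mul_of_nonneg_left hcos (le_of_lt hp2)
    have heq : Real.pi ^ 2 * (1 - 2 / Real.pi ^ 2 * Θ ^ 2) = Real.pi ^ 2 - 2 * Θ ^ 2 := by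
      field_simp
    rw [heq] at hmul
    exact hmul
  have h2 : 4 * Θ ^ 2 ≤ (2 - 2 * Real.cos Θ) * Real.pi ^ 2 := by nlinarith
  have hfinal : 4 * Θ ^ 2 * ‖v‖ ^ 2 ≤ Real.pi ^ 2 * ‖ψ‖ ^ 2 := by
    nlinarith [mul_le_mul_of_nonneg_right h2 hv2,
      mul_le_mul_of_nonneg_left hTψ (le_of_lt hp2)]
  rw [div_mul_eq_mul_div, le_div_iff₀ (by positivity : (0 : ℝ) < 4 * Θ ^ 2)]
  nlinarith [hfinal]
end

section
/- Let A : H → V be a linear map between finite-dimensional real inner product spaces, let τ ∈ V, and suppose there exists w ∈ H with A w = τ. Then the minimum of ‖Π_{K^⊥} ŵ‖² over all ŵ ∈ H with A ŵ = τ, where K ⊆ H is a fixed subspace and Π_{K^⊥} is the orthogonal projection onto K^⊥, times the minimum of ‖ω∘A‖² over all linear functionals ω : V → ℝ with ω(τ) = 1 and ω∘A vanishing on K (when such ω exists), is at least 1. That is: min{‖Π_{K^⊥} ŵ‖² : A ŵ = τ} ≥ 1 / min{‖ω∘A‖² : ω(τ)=1, (ω∘A)|_K = 0}. -/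
/-- Span-program witness duality: the minimum positive-witness error
`min{‖Π_{K^⊥} ŵ‖² : A ŵ = τ}` is at least the reciprocal of the minimum negative-witness
size `min{‖ω∘A‖² : ω(τ) = 1, (ω∘A)|_K = 0}`. -/
theorem stmt7 {H V : Type*} [NormedAddCommGroup H] [InnerProductSpace ℝ H]
    [FiniteDimensional ℝ H] [NormedAddCommGroup V] [InnerProductSpace ℝ V]
    [FiniteDimensional ℝ V]
    (A : H →ₗ[ℝ] V) (τ : V) (K : Submodule ℝ H)
    (hpos : ∃ w : H, A w = τ)
    (hneg : ∃ ω : V →ₗ[ℝ] ℝ, ω τ = 1 ∧ ∀ k ∈ K, ω (A k) = 0) :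
    sInf {e : ℝ | ∃ w : H, A w = τ ∧ e = ‖(Submodule.orthogonalProjectionOnto Kᗮ w : H)‖ ^ 2}
      ≥ 1 / sInf {s : ℝ | ∃ ω : V →ₗ[ℝ] ℝ, ω τ = 1 ∧ (∀ k ∈ K, ω (A k) = 0) ∧
          s = ‖LinearMap.toContinuousLinearMap (ω ∘ₗ A)‖ ^ 2} := by
  obtain ⟨w0, hw0⟩ := hpos
  obtain ⟨ω0, hω0, hK0⟩ := hneg
  set S := {s : ℝ | ∃ ω : V →ₗ[ℝ] ℝ, ω τ = 1 ∧ (∀ k ∈ K, ω (A k) = 0) ∧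
      s = ‖LinearMap.toContinuousLinearMap (ω ∘ₗ A)‖ ^ 2} with hSdef
  set E := {e : ℝ | ∃ w : H, A w = τ ∧ e = ‖(Submodule.orthogonalProjectionOnto Kᗮ w : H)‖ ^ 2} with hEdef
  have hSne : S.Nonempty := ⟨_, ω0, hω0, hK0, rfl⟩
  have hEne : E.Nonempty := ⟨_, w0, hw0, rfl⟩
  have hSlb : ∀ s ∈ S, (0:ℝ) ≤ s := by
    rintro s ⟨ω, -, -, rfl⟩; positivity
  have hSbdd : BddBelow S := ⟨0, hSlb⟩
  have key : ∀ w : H, A w = τ → ∀ ω : V →ₗ[ℝ] ℝ, ω τ = 1 → (∀ k ∈ K, ω (A k) = 0) →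
      1 ≤ ‖(Submodule.orthogonalProjectionOnto Kᗮ w : H)‖ ^ 2 *
        ‖LinearMap.toContinuousLinearMap (ω ∘ₗ A)‖ ^ 2 := by
    intro w hw ω hτ hK
    set q : H := (Submodule.orthogonalProjectionOnto Kᗮ w : H) with hq
    set f := LinearMap.toContinuousLinearMap (ω ∘ₗ A) with hf
    have hmem : w - q ∈ K := by
      have h := Submodule.sub_starProjection_mem_orthogonal (K := Kᗮ) w
      rwa [Submodule.orthogonal_orthogonal] at h
    have h1 : ω (A q) = 1 := by
      have h0 : ω (A (w - q)) = 0 := hK _ hmem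
      rw [map_sub, map_sub, hw, hτ] at h0
      linarith
    have h2 : |ω (A q)| ≤ ‖f‖ * ‖q‖ := by
      have := f.le_opNorm q
      simpa [hf, Real.norm_eq_abs] using this
    rw [h1] at h2
    have hfn : (0:ℝ) ≤ ‖f‖ := norm_nonneg _
    have hqn : (0:ℝ) ≤ ‖q‖ := norm_nonneg _
    have : (1:ℝ) ≤ ‖f‖ * ‖q‖ := by simpa using h2
    nlinarith
  rw [ge_iff_le]
  apply le_csInf hEne
  rintro e ⟨w, hw, rfl⟩
  set e := ‖(Submodule.orthogonalProjectionOnto Kᗮ w : H)‖ ^ 2 with he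
  have he0 : 0 < e := by
    have h := key w hw ω0 hω0 hK0
    have : (0:ℝ) ≤ ‖LinearMap.toContinuousLinearMap (ω0 ∘ₗ A)‖ ^ 2 := by positivity
    nlinarith [sq_nonneg ‖(Submodule.orthogonalProjectionOnto Kᗮ w : H)‖]
  have hSInf0 : 0 ≤ sInf S := le_csInf hSne hSlb
  rcases eq_or_lt_of_le hSInf0 with h0 | h0
  · rw [← h0]; simp; exact he0.le
  · rw [div_le_iff₀ h0]
    have hle : 1 / e ≤ sInf S := by
      apply le_csInf hSne
      rintro s ⟨ω, hτ, hK, rfl⟩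
      have h := key w hw ω hτ hK
      rw [div_le_iff₀ he0] at *
      nlinarith
    calc (1:ℝ) = e * (1 / e) := by field_simp
    _ ≤ e * sInf S := by exact mul_le_mul_of_nonneg_left hle he0.le
end

section
/- Let f : {0,1}^m → {−1,+1} and suppose α₁, …, α_ℓ are partial assignments (certificates) of size at most C on coordinate sets S₁,…,S_ℓ ⊆ [m], such that every z ∈ {0,1}^m satisfies at least one α_i, and whenever z satisfies α_i then f(z) = v_i for a fixed value v_i ∈ {−1,+1}. For any positive integer λ, define the (m, λ, f)-pattern matrix F and the rectangles X_{i,k,b}, Y_{i,k,b} for i ∈ [ℓ], k ∈ [λ]^{S_i}, b ∈ {0,1}^{S_i} as in the construction. Then each restriction F ∘ Δ_{i,k,b} (F zeroed outside Y_{i,k,b} × X_{i,k,b}) has rank exactly 1 if the rectangle is nonempty (every entry in the rectangle equals v_i), and the rectangles cover all of {0,1}^{λm} × ([λ]^m × {0,1}^m). -/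
open scoped Classical

lemma xor_helper1 (y w a : Bool) (h : xor y w = a) : y = xor w a := by
  revert h; cases y <;> cases w <;> cases a <;> decide

lemma xor_helper2 (b a : Bool) : xor (xor b a) b = a := by
  cases b <;> cases a <;> decide

/-- Rectangle cover of the pattern matrix obtained from certificates: the rectangles
`X_{i,k,b} × Y_{i,k,b}` cover everything, every entry of `F` inside a rectangle for
certificate `i` equals `v_i`, and each restriction `F ∘ Δ_{i,k,b}` has rank exactly `1`
when the rectangle is nonempty. -/
theorem stmt9 (m lam ℓ C : ℕ) (hlam : 0 < lam)
    (f : (Fin m → Bool) → ℝ) (hf : ∀ z, f z = 1 ∨ f z = -1)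
    (S : Fin ℓ → Finset (Fin m)) (hS : ∀ i, (S i).card ≤ C)
    (α : Fin ℓ → Fin m → Bool) (v : Fin ℓ → ℝ)
    (hcover : ∀ z : Fin m → Bool, ∃ i, ∀ j ∈ S i, z j = α i j)
    (hcert : ∀ i (z : Fin m → Bool), (∀ j ∈ S i, z j = α i j) → f z = v i)
    (F : Matrix (Fin m → Fin lam → Bool) ((Fin m → Fin lam) × (Fin m → Bool)) ℝ)
    (hF : ∀ y xw, F y xw = f (fun j => xor (y j (xw.1 j)) (xw.2 j)))
    (Δ : Fin ℓ → (Fin m → Fin lam) → (Fin m → Bool) →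
      Matrix (Fin m → Fin lam → Bool) ((Fin m → Fin lam) × (Fin m → Bool)) ℝ)
    (hΔ : ∀ i k b y xw, Δ i k b y xw =
      if (∀ j ∈ S i, y j (k j) = xor (b j) (α i j)) ∧
         (∀ j ∈ S i, xw.1 j = k j ∧ xw.2 j = b j) then 1 else 0) :
    -- the rectangles cover all of {0,1}^{λm} × ([λ]^m × {0,1}^m)
    (∀ (y : Fin m → Fin lam → Bool) (x : Fin m → Fin lam) (w : Fin m → Bool),
      ∃ (i : Fin ℓ) (k : Fin m → Fin lam) (b : Fin m → Bool),
        (∀ j ∈ S i, y j (k j) = xor (b j) (α i j)) ∧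
        (∀ j ∈ S i, x j = k j ∧ w j = b j)) ∧
    -- inside the rectangle for certificate i, every entry of F equals v i
    (∀ (i : Fin ℓ) (k : Fin m → Fin lam) (b : Fin m → Bool)
        (y : Fin m → Fin lam → Bool) (xw : (Fin m → Fin lam) × (Fin m → Bool)),
      (∀ j ∈ S i, y j (k j) = xor (b j) (α i j)) →
      (∀ j ∈ S i, xw.1 j = k j ∧ xw.2 j = b j) →
      F y xw = v i) ∧
    -- if the rectangle is nonempty, the restriction F ∘ Δ has rank exactly 1
    (∀ (i : Fin ℓ) (k : Fin m → Fin lam) (b : Fin m → Bool),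
      (∃ (y : Fin m → Fin lam → Bool) (xw : (Fin m → Fin lam) × (Fin m → Bool)),
          (∀ j ∈ S i, y j (k j) = xor (b j) (α i j)) ∧
          (∀ j ∈ S i, xw.1 j = k j ∧ xw.2 j = b j)) →
      (Matrix.hadamard F (Δ i k b)).rank = 1) := by
  -- entry statement
  have hentry : ∀ (i : Fin ℓ) (k : Fin m → Fin lam) (b : Fin m → Bool)
      (y : Fin m → Fin lam → Bool) (xw : (Fin m → Fin lam) × (Fin m → Bool)),
      (∀ j ∈ S i, y j (k j) = xor (b j) (α i j)) →
      (∀ j ∈ S i, xw.1 j = k j ∧ xw.2 j = b j) →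
      F y xw = v i := by
    intro i k b y xw hY hX
    rw [hF]
    apply hcert
    intro j hj
    have h1 := (hX j hj).1
    have h2 := (hX j hj).2
    simp only [h1, h2, hY j hj]
    exact xor_helper2 _ _
  refine ⟨?_, hentry, ?_⟩
  · intro y x w
    obtain ⟨i, hi⟩ := hcover (fun j => xor (y j (x j)) (w j))
    exact ⟨i, x, w, fun j hj => xor_helper1 _ _ _ (hi j hj),
      fun j hj => ⟨rfl, rfl⟩⟩
  · intro i k b ⟨y0, xw0, hY0, hX0⟩
    -- v i ≠ 0
    have hvF : F y0 xw0 = v i := hentry i k b y0 xw0 hY0 hX0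
    have hv : v i ≠ 0 := by
      rcases hf (fun j => xor (y0 j (xw0.1 j)) (xw0.2 j)) with h | h <;>
        · rw [hF] at hvF; rw [hvF] at h; rw [h]; norm_num
    set M := Matrix.hadamard F (Δ i k b) with hM
    -- M = vecMulVec u c
    set u : (Fin m → Fin lam → Bool) → ℝ :=
      fun y => if (∀ j ∈ S i, y j (k j) = xor (b j) (α i j)) then v i else 0 with hu
    set c : ((Fin m → Fin lam) × (Fin m → Bool)) → ℝ :=
      fun xw => if (∀ j ∈ S i, xw.1 j = k j ∧ xw.2 j = b j) then (1:ℝ) else 0 with hc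
    have hMeq : M = Matrix.vecMulVec u c := by
      ext y xw
      simp only [Matrix.hadamard_apply, Matrix.vecMulVec_apply, hΔ, hM, hu, hc]
      by_cases hY : ∀ j ∈ S i, y j (k j) = xor (b j) (α i j) <;>
      by_cases hX : ∀ j ∈ S i, xw.1 j = k j ∧ xw.2 j = b j
      · rw [if_pos ⟨hY, hX⟩, if_pos hY, if_pos hX, hentry i k b y xw hY hX, mul_one]
      · simp [hY, hX]
      · simp [hY, hX]
      · simp [hY, hX]
    have hle : M.rank ≤ 1 := by
      rw [hMeq, Matrix.vecMulVec_eq (Fin 1)]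
      calc (Matrix.replicateCol (Fin 1) u * Matrix.replicateRow (Fin 1) c).rank
          ≤ (Matrix.replicateRow (Fin 1) c).rank := Matrix.rank_mul_le_right _ _
        _ ≤ 1 := by
            have := Matrix.rank_le_card_height (Matrix.replicateRow (Fin 1) c)
            simpa using this
    have hge : 1 ≤ M.rank := by
      rw [Matrix.rank]
      rw [Nat.one_le_iff_ne_zero]
      intro h0
      have hbot : LinearMap.range M.mulVecLin = ⊥ := by
        have := Submodule.finrank_eq_zero (R := ℝ)
          (S := LinearMap.range M.mulVecLin)
        exact this.mp h0
      have : M.mulVecLin (Pi.single xw0 1) = 0 := by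
        have : M.mulVecLin (Pi.single xw0 1) ∈ LinearMap.range M.mulVecLin :=
          LinearMap.mem_range_self _ _
        rw [hbot] at this
        simpa using this
      have hcol : M.mulVec (Pi.single xw0 1) y0 = M y0 xw0 := by
        simp [Matrix.mulVec_single_one]
      rw [Matrix.mulVecLin_apply] at this
      rw [this] at hcol
      have : M y0 xw0 = v i := by
        simp only [hM, Matrix.hadamard_apply, hΔ]
        rw [if_pos ⟨hY0, hX0⟩, hvF, mul_one]
      rw [this] at hcol
      exact hv hcol.symm
    omega
end

section
/- Let P = (H, V, τ, A) be a span program over ℂ with H = span_ℂ{e_k}. Construct a real span program P' with H' = span_ℝ{e_{k,0}, e_{k,1}}, A' e_{k,0} = Re(A e_k) ⊗ |0⟩ + Im(A e_k) ⊗ |1⟩, A' e_{k,1} = Re(A e_k) ⊗ |1⟩ − Im(A e_k) ⊗ |0⟩, and target τ' = τ ⊗ |0⟩ (assuming τ real). Then for any complex vector w with A w = τ, the real vector w' = Re(w) ⊗ |0⟩ + Im(w) ⊗ |1⟩ satisfies A' w' = τ' and ‖w'‖ = ‖w‖. -/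
private lemma piLp_sum_apply {ι : Type*} (s : Finset ι) {κ : Type*}
    (f : ι → EuclideanSpace ℝ κ) (p : κ) : (∑ i ∈ s, f i) p = ∑ i ∈ s, f i p := by
  classical
  induction s using Finset.induction with
  | empty => simp
  | insert _ _ h ih => simp [Finset.sum_insert h, ih]

/-- A complex span program can be realized over ℝ: if `A' e_{k,0} = Re(Ae_k)⊗|0⟩ + Im(Ae_k)⊗|1⟩`,
`A' e_{k,1} = Re(Ae_k)⊗|1⟩ − Im(Ae_k)⊗|0⟩`, `τ` has real coordinates, and
`w' = Re(w)⊗|0⟩ + Im(w)⊗|1⟩` for a complex witness `w` with `A w = τ`, then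
`A' w' = τ ⊗ |0⟩` and `‖w'‖ = ‖w‖`. -/
theorem stmt10 (K d : ℕ)
    (A : EuclideanSpace ℂ (Fin K) →ₗ[ℂ] EuclideanSpace ℂ (Fin d))
    (τ : EuclideanSpace ℂ (Fin d)) (hτ : ∀ j, (τ j).im = 0)
    (A' : EuclideanSpace ℝ (Fin K × Fin 2) →ₗ[ℝ] EuclideanSpace ℝ (Fin d × Fin 2))
    (hA'0 : ∀ k : Fin K, A' (EuclideanSpace.single (k, 0) 1) =
      (WithLp.equiv 2 (Fin d × Fin 2 → ℝ)).symm (fun p =>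
        if p.2 = 0 then (A (EuclideanSpace.single k 1) p.1).re
        else (A (EuclideanSpace.single k 1) p.1).im))
    (hA'1 : ∀ k : Fin K, A' (EuclideanSpace.single (k, 1) 1) =
      (WithLp.equiv 2 (Fin d × Fin 2 → ℝ)).symm (fun p =>
        if p.2 = 1 then (A (EuclideanSpace.single k 1) p.1).re
        else -(A (EuclideanSpace.single k 1) p.1).im))
    (w : EuclideanSpace ℂ (Fin K)) (hw : A w = τ)
    (w' : EuclideanSpace ℝ (Fin K × Fin 2))
    (hw' : ∀ k : Fin K, w' (k, 0) = (w k).re ∧ w' (k, 1) = (w k).im) :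
    A' w' = (WithLp.equiv 2 (Fin d × Fin 2 → ℝ)).symm
        (fun p => if p.2 = 0 then (τ p.1).re else 0) ∧
    ‖w'‖ = ‖w‖ := by
  have csum : ∀ (x : EuclideanSpace ℂ (Fin K)) (j : Fin d),
      (∑ k, x k • A (EuclideanSpace.single k 1)) j
        = ∑ k, x k * A (EuclideanSpace.single k 1) j := by
    intro x j
    classical
    induction (Finset.univ : Finset (Fin K)) using Finset.induction with
    | empty => simp
    | insert _ _ h ih => simp [Finset.sum_insert h, ih, smul_eq_mul]
  have hwdec : w = ∑ k, w k • EuclideanSpace.single k (1 : ℂ) := by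
    ext j
    rw [show ((∑ k, w k • EuclideanSpace.single k (1:ℂ)) j
        = ∑ k, (w k • EuclideanSpace.single k (1:ℂ)) j) from by
      classical
      induction (Finset.univ : Finset (Fin K)) using Finset.induction with
      | empty => simp
      | insert _ _ h ih => simp [Finset.sum_insert h, ih]]
    simp [EuclideanSpace.single_apply, Finset.sum_ite_eq']
  have hwsum : ∀ j : Fin d, τ j = ∑ k, w k * (A (EuclideanSpace.single k 1)) j := by
    intro j
    rw [← hw]
    conv_lhs => rw [hwdec]
    rw [map_sum]
    simp only [map_smul]
    exact csum w j
  have hw'sum : w' = ∑ k, ((w k).re • EuclideanSpace.single ((k : Fin K), (0 : Fin 2)) (1:ℝ)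
      + (w k).im • EuclideanSpace.single (k, (1 : Fin 2)) (1:ℝ)) := by
    ext p
    obtain ⟨k, i⟩ := p
    rw [piLp_sum_apply]
    fin_cases i <;>
      simp [EuclideanSpace.single_apply, Finset.sum_ite_eq', (hw' k).1, (hw' k).2,
        Prod.ext_iff]
  constructor
  · rw [hw'sum, map_sum]
    simp only [map_add, map_smul, hA'0, hA'1]
    ext p
    obtain ⟨j, i⟩ := p
    rw [piLp_sum_apply]
    simp only [PiLp.add_apply, PiLp.smul_apply, WithLp.equiv_symm_apply, PiLp.toLp_apply, smul_eq_mul]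
    fin_cases i
    · have key : (τ j).re = ∑ k, ((w k).re * (A (EuclideanSpace.single k 1) j).re
          - (w k).im * (A (EuclideanSpace.single k 1) j).im) := by
        rw [hwsum j]
        simp [Complex.mul_re, Complex.re_sum]
      simp only [Fin.isValue, Fin.zero_eta, if_true, if_false, Fin.mk_one,
        Fin.one_eq_zero_iff, OfNat.ofNat_ne_one, ite_false, ite_true]
      norm_num
      rw [key]
      all_goals exact Finset.sum_congr rfl fun k _ => by ring
    · have key : (0:ℝ) = ∑ k, ((w k).re * (A (EuclideanSpace.single k 1) j).im
          + (w k).im * (A (EuclideanSpace.single k 1) j).re) := by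
        have h2 : (τ j).im = ∑ k, ((w k).re * (A (EuclideanSpace.single k 1) j).im
            + (w k).im * (A (EuclideanSpace.single k 1) j).re) := by
          rw [hwsum j]; simp [Complex.mul_im, Complex.im_sum]
        rw [← h2, hτ j]
      norm_num
      rw [key]
  · rw [EuclideanSpace.norm_eq, EuclideanSpace.norm_eq]
    congr 1
    rw [Fintype.sum_prod_type]
    apply Finset.sum_congr rfl
    intro k _
    rw [Fin.sum_univ_two, (hw' k).1, (hw' k).2]
    simp [Real.norm_eq_abs, sq_abs, sq, Complex.norm_def,
      Real.mul_self_sqrt (add_nonneg (mul_self_nonneg _) (mul_self_nonneg _)),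
      Complex.normSq_apply]
end

section
/- Let F be the (m, λ, p)-pattern matrix of a function p : {0,1}^m → ℝ. Then rank(F) = Σ_{S ⊆ [m] : p̂(S) ≠ 0} λ^{|S|}, where p̂(S) are the Fourier coefficients of p. -/
open scoped Classical

namespace Stmt15

noncomputable def sgn (b : Bool) : ℝ := if b then -1 else 1

lemma sgn_xor (a b : Bool) : sgn (xor a b) = sgn a * sgn b := by
  cases a <;> cases b <;> simp [sgn]

noncomputable def chiS {ι : Type*} (S : Finset ι) (z : ι → Bool) : ℝ := ∏ i ∈ S, sgn (z i)

lemma chiS_univ_ite {ι : Type*} [Fintype ι] [DecidableEq ι] (S : Finset ι) (z : ι → Bool) :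
    chiS S z = ∏ i, (if i ∈ S then sgn (z i) else 1) := by
  rw [Finset.prod_ite_mem, Finset.univ_inter, chiS]

/-- Orthogonality of characters summed over points of the cube. -/
lemma orth_chiS {ι : Type*} [Fintype ι] [DecidableEq ι] (A B : Finset ι) :
    ∑ w : ι → Bool, chiS A w * chiS B w =
      if A = B then (2 : ℝ) ^ Fintype.card ι else 0 := by
  have key : ∀ w : ι → Bool, chiS A w * chiS B w =
      ∏ i, ((if i ∈ A then sgn (w i) else 1) * (if i ∈ B then sgn (w i) else 1)) := by
    intro w
    rw [chiS_univ_ite, chiS_univ_ite, Finset.prod_mul_distrib]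
  simp_rw [key]
  rw [← Fintype.prod_sum
    (fun i (b : Bool) => (if i ∈ A then sgn b else 1) * (if i ∈ B then sgn b else 1))]
  have hfac : ∀ i : ι, (∑ b : Bool, (if i ∈ A then sgn b else 1) * (if i ∈ B then sgn b else 1))
      = if (i ∈ A) = (i ∈ B) then (2 : ℝ) else 0 := by
    intro i
    by_cases hA : i ∈ A <;> by_cases hB : i ∈ B <;> simp [hA, hB, sgn] <;> norm_num
  simp_rw [hfac]
  by_cases h : A = B
  · subst h
    simp [Finset.prod_const]
  · have : ∃ i, (i ∈ A) ≠ (i ∈ B) := by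
      by_contra hc
      push_neg at hc
      exact h (Finset.ext fun i => iff_of_eq (hc i))
    obtain ⟨i, hi⟩ := this
    rw [if_neg h]
    exact Finset.prod_eq_zero (Finset.mem_univ i) (by rw [if_neg hi])

/-- Dual orthogonality: sum over all subsets. -/
lemma orth_point {ι : Type*} [Fintype ι] [DecidableEq ι] (z z' : ι → Bool) :
    ∑ S : Finset ι, chiS S z * chiS S z' =
      if z = z' then (2 : ℝ) ^ Fintype.card ι else 0 := by
  have key : ∀ S : Finset ι, chiS S z * chiS S z' = ∏ i ∈ S, (sgn (z i) * sgn (z' i)) := by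
    intro S; rw [Finset.prod_mul_distrib]; rfl
  simp_rw [key]
  have := Fintype.prod_add (fun i => sgn (z i) * sgn (z' i)) (fun _ => (1 : ℝ))
  simp only [Finset.prod_const_one, mul_one] at this
  rw [← this]
  have hfac : ∀ i : ι, sgn (z i) * sgn (z' i) + 1 = if z i = z' i then (2 : ℝ) else 0 := by
    intro i; cases hz : z i <;> cases hz' : z' i <;> simp [sgn] <;> norm_num
  simp_rw [hfac]
  by_cases h : z = z'
  · subst h; simp [Finset.prod_const]
  · obtain ⟨i, hi⟩ : ∃ i, z i ≠ z' i := by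
      by_contra hc; push_neg at hc; exact h (funext hc)
    rw [if_neg h]
    exact Finset.prod_eq_zero (Finset.mem_univ i) (by rw [if_neg hi])

noncomputable def phat (m : ℕ) (p : (Fin m → Bool) → ℝ) (S : Finset (Fin m)) : ℝ :=
  ((1 : ℝ) / 2 ^ m) * ∑ z : Fin m → Bool, p z * chiS S z

lemma inversion (m : ℕ) (p : (Fin m → Bool) → ℝ) (z : Fin m → Bool) :
    ∑ S : Finset (Fin m), phat m p S * chiS S z = p z := by
  have h1 : ∀ S : Finset (Fin m), phat m p S * chiS S z
      = ∑ z' : Fin m → Bool, (1 : ℝ) / 2 ^ m * p z' * (chiS S z' * chiS S z) := by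
    intro S
    rw [phat, Finset.mul_sum, Finset.sum_mul]
    exact Finset.sum_congr rfl fun z' _ => by ring
  calc ∑ S : Finset (Fin m), phat m p S * chiS S z
      = ∑ S : Finset (Fin m), ∑ z' : Fin m → Bool,
          (1 : ℝ) / 2 ^ m * p z' * (chiS S z' * chiS S z) := by simp_rw [h1]
    _ = ∑ z' : Fin m → Bool, ∑ S : Finset (Fin m),
          (1 : ℝ) / 2 ^ m * p z' * (chiS S z' * chiS S z) := Finset.sum_comm
    _ = ∑ z' : Fin m → Bool,
          (1 : ℝ) / 2 ^ m * p z' * (if z' = z then (2 : ℝ) ^ m else 0) := by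
        refine Finset.sum_congr rfl fun z' _ => ?_
        rw [← Finset.mul_sum, orth_point, Fintype.card_fin]
    _ = p z := by
        simp only [mul_ite, mul_zero, Finset.sum_ite_eq', Finset.mem_univ, if_true]
        have h2 : (2 : ℝ) ^ m ≠ 0 := by positivity
        field_simp



noncomputable def chi {m lam : ℕ} (A : Finset (Fin m × Fin lam)) (y : Fin m → Fin lam → Bool) : ℝ :=
  ∏ q ∈ A, sgn (y q.1 q.2)

lemma orth_chi {m lam : ℕ} (A B : Finset (Fin m × Fin lam)) :
    ∑ y : Fin m → Fin lam → Bool, chi A y * chi B y =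
      if A = B then (2 : ℝ) ^ Fintype.card (Fin m × Fin lam) else 0 := by
  rw [← orth_chiS A B]
  refine (Fintype.sum_equiv (Equiv.curry (Fin m) (Fin lam) Bool) _ _ fun w => ?_).symm
  simp [chi, chiS, Equiv.curry]

noncomputable def sig {m lam : ℕ} (S : Finset (Fin m)) (x : Fin m → Fin lam) :
    Finset (Fin m × Fin lam) :=
  S.image (fun j => (j, x j))

lemma chi_sig {m lam : ℕ} (S : Finset (Fin m)) (x : Fin m → Fin lam)
    (y : Fin m → Fin lam → Bool) :
    chi (sig S x) y = ∏ j ∈ S, sgn (y j (x j)) := by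
  rw [chi, sig, Finset.prod_image]
  intro a _ b _ h
  exact (Prod.mk.injEq _ _ _ _ |>.mp h).1

lemma sig_fst {m lam : ℕ} (S : Finset (Fin m)) (x : Fin m → Fin lam) :
    (sig S x).image Prod.fst = S := by
  rw [sig, Finset.image_image]
  exact Finset.image_id'

lemma decomp (m lam : ℕ) (p : (Fin m → Bool) → ℝ) (x : Fin m → Fin lam) (w : Fin m → Bool)
    (y : Fin m → Fin lam → Bool) :
    p (fun j => xor (y j (x j)) (w j)) =
      ∑ S : Finset (Fin m), phat m p S * chiS S w * chi (sig S x) y := by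
  rw [← inversion m p (fun j => xor (y j (x j)) (w j))]
  refine Finset.sum_congr rfl fun S _ => ?_
  rw [chi_sig]
  show phat m p S * ∏ j ∈ S, sgn (xor (y j (x j)) (w j)) = _
  simp_rw [sgn_xor]
  rw [Finset.prod_mul_distrib]
  show _ = phat m p S * (∏ j ∈ S, sgn (w j)) * ∏ j ∈ S, sgn (y j (x j))
  ring

lemma chi_li (m lam : ℕ) :
    LinearIndependent ℝ (fun A : Finset (Fin m × Fin lam) => chi A) := by
  rw [Fintype.linearIndependent_iff]
  intro g hg B
  have hy : ∀ y, ∑ A : Finset (Fin m × Fin lam), g A * chi A y = 0 := by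
    intro y
    have := congrFun hg y
    simpa [Finset.sum_apply, Pi.smul_apply, smul_eq_mul] using this
  have key : g B * (2 : ℝ) ^ Fintype.card (Fin m × Fin lam) = 0 := by
    calc g B * (2 : ℝ) ^ Fintype.card (Fin m × Fin lam)
        = ∑ A : Finset (Fin m × Fin lam),
            g A * (if A = B then (2 : ℝ) ^ Fintype.card (Fin m × Fin lam) else 0) := by
          simp [mul_ite, mul_zero, Finset.sum_ite_eq']
      _ = ∑ A : Finset (Fin m × Fin lam), g A * ∑ y, chi A y * chi B y := by
          simp_rw [orth_chi]
      _ = ∑ A : Finset (Fin m × Fin lam), ∑ y, g A * (chi A y * chi B y) := by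
          simp_rw [Finset.mul_sum]
      _ = ∑ y, ∑ A : Finset (Fin m × Fin lam), g A * (chi A y * chi B y) := Finset.sum_comm
      _ = ∑ y, (∑ A : Finset (Fin m × Fin lam), g A * chi A y) * chi B y := by
          refine Finset.sum_congr rfl fun y _ => ?_
          rw [Finset.sum_mul]
          exact Finset.sum_congr rfl fun A _ => by ring
      _ = 0 := by simp [hy]
  have h2 : (2 : ℝ) ^ Fintype.card (Fin m × Fin lam) ≠ 0 := by positivity
  exact (mul_eq_zero.mp key).resolve_right h2

lemma image_attach_eq {α β : Type*} [DecidableEq β] (S : Finset α) (f : α → β) :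
    S.attach.image (fun j => f j.1) = S.image f := by
  ext b
  simp

lemma card_image_sig {m lam : ℕ} (hlam : 0 < lam) (S : Finset (Fin m)) :
    ((Finset.univ : Finset (Fin m → Fin lam)).image (fun x => sig S x)).card
      = lam ^ S.card := by
  classical
  have e : Fin lam := ⟨0, hlam⟩
  set τ : ({j // j ∈ S} → Fin lam) → Finset (Fin m × Fin lam) :=
    fun g => S.attach.image (fun j => (j.1, g j)) with hτ
  have hτinj : Function.Injective τ := by
    intro g g' h
    funext j
    have hmem : (j.1, g j) ∈ τ g := Finset.mem_image_of_mem _ (Finset.mem_attach _ j)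
    rw [h] at hmem
    obtain ⟨j', _, hj'⟩ := Finset.mem_image.mp hmem
    obtain ⟨h1, h2⟩ := Prod.mk.injEq _ _ _ _ |>.mp hj'
    have : j' = j := Subtype.ext h1
    subst this
    exact h2.symm
  have himg : (Finset.univ : Finset (Fin m → Fin lam)).image (fun x => sig S x)
      = Finset.univ.image τ := by
    ext A
    simp only [Finset.mem_image, Finset.mem_univ, true_and]
    constructor
    · rintro ⟨x, rfl⟩
      refine ⟨fun j => x j.1, ?_⟩
      show S.attach.image (fun j => (j.1, x j.1)) = sig S x
      rw [sig]
      exact image_attach_eq (β := Fin m × Fin lam) S (fun j => (j, x j))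
    · rintro ⟨g, rfl⟩
      refine ⟨fun j => if h : j ∈ S then g ⟨j, h⟩ else e, ?_⟩
      show sig S _ = S.attach.image (fun j => (j.1, g j))
      rw [sig]
      refine (image_attach_eq (β := Fin m × Fin lam) S _).symm.trans (Finset.image_congr fun j _ => ?_)
      show ((j : Fin m), if h : (j : Fin m) ∈ S then g ⟨j, h⟩ else e) = (↑j, g j)
      rw [dif_pos j.2, Subtype.coe_eta]
  rw [himg, Finset.card_image_of_injective _ hτinj, Finset.card_univ, Fintype.card_fun,
    Fintype.card_fin, Fintype.card_coe]

end Stmt15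
open Stmt15 in
/-- The rank of the `(m, λ, p)`-pattern matrix equals `Σ_{S : p̂(S) ≠ 0} λ^{|S|}`, where
`p̂(S) = 2^{−m} Σ_z p(z) χ_S(z)` are the Fourier coefficients of `p`. -/
theorem stmt15 (m lam : ℕ) (hlam : 0 < lam) (p : (Fin m → Bool) → ℝ)
    (F : Matrix (Fin m → Fin lam → Bool) ((Fin m → Fin lam) × (Fin m → Bool)) ℝ)
    (hF : ∀ y xw, F y xw = p (fun j => xor (y j (xw.1 j)) (xw.2 j))) :
    F.rank = ∑ S ∈ Finset.univ.filter (fun S : Finset (Fin m) =>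
        ((1 : ℝ) / 2 ^ m) * ∑ z : Fin m → Bool,
          p z * (-1 : ℝ) ^ (S.filter (fun i => z i = true)).card ≠ 0),
      lam ^ S.card := by
  classical
  -- The statement's Fourier coefficient is `phat`.
  have hpred : ∀ S : Finset (Fin m),
      ((1 : ℝ) / 2 ^ m) * ∑ z : Fin m → Bool,
        p z * (-1 : ℝ) ^ (S.filter (fun i => z i = true)).card = phat m p S := by
    intro S
    rw [phat]
    congr 1
    refine Finset.sum_congr rfl fun z _ => ?_
    congr 1
    rw [← Finset.prod_const, Finset.prod_filter, chiS]
    refine Finset.prod_congr rfl fun i _ => ?_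
    cases h : z i <;> simp [sgn, h]
  set good : Finset (Finset (Fin m)) := Finset.univ.filter (fun S => phat m p S ≠ 0) with hgood
  set 𝒜 : Finset (Finset (Fin m × Fin lam)) :=
    good.biUnion (fun S => Finset.univ.image (fun x : Fin m → Fin lam => sig S x)) with h𝒜
  -- membership in 𝒜
  have hmem𝒜 : ∀ A : Finset (Fin m × Fin lam), A ∈ 𝒜 ↔
      ∃ S, phat m p S ≠ 0 ∧ ∃ x : Fin m → Fin lam, sig S x = A := by
    intro A
    simp [h𝒜, hgood, Finset.mem_biUnion, Finset.mem_image, Finset.mem_filter]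
  -- column decomposition
  have hcol : ∀ c : (Fin m → Fin lam) × (Fin m → Bool),
      F.transpose c = ∑ S : Finset (Fin m), (phat m p S * chiS S c.2) • chi (sig S c.1) := by
    intro c
    funext y
    rw [Matrix.transpose_apply, hF, Finset.sum_apply]
    show p (fun j => xor (y j (c.1 j)) (c.2 j)) = _
    rw [decomp m lam p c.1 c.2 y]
    exact Finset.sum_congr rfl fun S _ => by
      simp [Pi.smul_apply, smul_eq_mul, mul_assoc]
  -- span of columns = span of characters chi A, A ∈ 𝒜
  have hspan1 : Submodule.span ℝ (Set.range F.transpose) ≤ Submodule.span ℝ (chi '' ↑𝒜) := by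
    rw [Submodule.span_le]
    rintro _ ⟨c, rfl⟩
    rw [hcol]
    refine Submodule.sum_mem _ fun S _ => ?_
    by_cases hS : phat m p S = 0
    · simp [hS]
    · refine Submodule.smul_mem _ _ (Submodule.subset_span ?_)
      exact ⟨sig S c.1, (hmem𝒜 _).mpr ⟨S, hS, c.1, rfl⟩, rfl⟩
  have hspan2 : Submodule.span ℝ (chi '' ↑𝒜) ≤ Submodule.span ℝ (Set.range F.transpose) := by
    rw [Submodule.span_le]
    rintro _ ⟨A, hAmem, rfl⟩
    obtain ⟨S, hS, x, rfl⟩ := (hmem𝒜 A).mp hAmem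
    have hv : (∑ w : Fin m → Bool, chiS S w • F.transpose (x, w))
        = ((2 : ℝ) ^ m * phat m p S) • chi (sig S x) := by
      funext y
      rw [Finset.sum_apply]
      simp only [Pi.smul_apply, smul_eq_mul, Matrix.transpose_apply]
      calc ∑ w : Fin m → Bool, chiS S w * F y (x, w)
          = ∑ w : Fin m → Bool, chiS S w *
              ∑ T : Finset (Fin m), phat m p T * chiS T w * chi (sig T x) y := by
            refine Finset.sum_congr rfl fun w _ => ?_
            rw [hF]
            show chiS S w * p (fun j => xor (y j (x j)) (w j)) = _
            rw [decomp m lam p x w y]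
        _ = ∑ w : Fin m → Bool, ∑ T : Finset (Fin m),
              chiS S w * (phat m p T * chiS T w * chi (sig T x) y) := by
            simp_rw [Finset.mul_sum]
        _ = ∑ T : Finset (Fin m), ∑ w : Fin m → Bool,
              chiS S w * (phat m p T * chiS T w * chi (sig T x) y) := Finset.sum_comm
        _ = ∑ T : Finset (Fin m), (phat m p T * chi (sig T x) y) *
              ∑ w : Fin m → Bool, chiS S w * chiS T w := by
            refine Finset.sum_congr rfl fun T _ => ?_
            rw [Finset.mul_sum]
            exact Finset.sum_congr rfl fun w _ => by ring
        _ = ∑ T : Finset (Fin m), (phat m p T * chi (sig T x) y) *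
              (if S = T then (2 : ℝ) ^ m else 0) := by
            simp_rw [orth_chiS, Fintype.card_fin]
        _ = (2 : ℝ) ^ m * phat m p S * chi (sig S x) y := by
            simp only [mul_ite, mul_zero, Finset.sum_ite_eq, Finset.mem_univ, if_true]
            ring
    have h2m : (2 : ℝ) ^ m * phat m p S ≠ 0 := mul_ne_zero (by positivity) hS
    have hrepr : chi (sig S x)
        = ((2 : ℝ) ^ m * phat m p S)⁻¹ • ∑ w : Fin m → Bool, chiS S w • F.transpose (x, w) := by
      rw [hv, smul_smul, inv_mul_cancel₀ h2m, one_smul]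
    rw [hrepr]
    exact Submodule.smul_mem _ _ (Submodule.sum_mem _ fun w _ =>
      Submodule.smul_mem _ _ (Submodule.subset_span ⟨(x, w), rfl⟩))
  have hspan : Submodule.span ℝ (Set.range F.transpose) = Submodule.span ℝ (chi '' ↑𝒜) :=
    le_antisymm hspan1 hspan2
  -- rank computation
  have hli : LinearIndependent ℝ (fun A : {A // A ∈ 𝒜} => chi A.1) :=
    (chi_li m lam).comp Subtype.val Subtype.val_injective
  have hfr : Module.finrank ℝ (Submodule.span ℝ
      (chi '' (↑𝒜 : Set (Finset (Fin m × Fin lam))))) = 𝒜.card := by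
    have himg : chi '' (↑𝒜 : Set (Finset (Fin m × Fin lam)))
        = Set.range (fun A : {A // A ∈ 𝒜} => chi A.1) := by
      ext f
      simp [Set.mem_image, Set.mem_range, Subtype.exists]
    rw [himg, finrank_span_eq_card hli, Fintype.card_coe]
  -- cardinality of 𝒜
  have hdisj : ∀ S ∈ good, ∀ T ∈ good, S ≠ T →
      Disjoint (Finset.univ.image (fun x : Fin m → Fin lam => sig S x))
        (Finset.univ.image (fun x : Fin m → Fin lam => sig T x)) := by
    intro S _ T _ hST
    rw [Finset.disjoint_left]
    rintro A hAS hAT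
    obtain ⟨x, _, rfl⟩ := Finset.mem_image.mp hAS
    obtain ⟨x', _, hx'⟩ := Finset.mem_image.mp hAT
    apply hST
    rw [← sig_fst S x, ← hx', sig_fst]
  have hcard : 𝒜.card = ∑ S ∈ good, lam ^ S.card := by
    rw [h𝒜, Finset.card_biUnion hdisj]
    exact Finset.sum_congr rfl fun S _ => card_image_sig hlam S
  rw [Matrix.rank_eq_finrank_span_cols]
  change Module.finrank ℝ (Submodule.span ℝ (Set.range F.transpose)) = _
  rw [hspan, hfr, hcard]
  refine (Finset.sum_congr ?_ fun _ _ => rfl).symm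
  exact Finset.filter_congr fun S _ => by rw [hpred S]
end

section
/- Let U = Σ_j e^{iθ_j}|λ_j⟩⟨λ_j| be a unitary on a finite-dimensional complex Hilbert space with θ_j ∈ (−π, π], and let ψ be a unit vector. For a positive integer T, define p = Σ_j |⟨λ_j|ψ⟩|² · |Σ_{t=0}^{T−1} e^{itθ_j}|²/T². Then for any Θ ∈ (0, π], p ≤ ‖Π_Θ ψ‖² + π²/(T²Θ²), where Π_Θ projects onto eigenvectors with |θ_j| ≤ Θ. -/
open scoped ComplexInnerProductSpace Classical

lemma geom_bound (θ : ℝ) (Θ : ℝ) (hΘ : 0 < Θ) (h1 : Θ < |θ|) (h2 : |θ| ≤ Real.pi) (T : ℕ) :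
    ‖∑ t ∈ Finset.range T, Complex.exp ((t : ℂ) * (θ : ℂ) * Complex.I)‖ ≤ Real.pi / Θ := by
  have hθpi : θ ≤ Real.pi := (le_abs_self θ).trans h2
  have hθpi' : -Real.pi ≤ θ := by
    have := (neg_abs_le θ); linarith
  have hsin : Θ / Real.pi ≤ |Real.sin (θ/2)| := by
    have h := Real.mul_le_sin (x := |θ|/2) (by positivity) (by linarith)
    have heq : |Real.sin (θ/2)| = Real.sin (|θ|/2) := by
      rcases le_or_gt 0 θ with h0|h0
      · rw [_root_.abs_of_nonneg h0, _root_.abs_of_nonneg (Real.sin_nonneg_of_nonneg_of_le_pi (by linarith)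
          (by linarith [Real.pi_pos]))]
      · rw [_root_.abs_of_neg h0, _root_.abs_of_nonpos (Real.sin_nonpos_of_nonpos_of_neg_pi_le
          (by linarith) (by linarith [Real.pi_pos]))]
        rw [show -θ/2 = -(θ/2) by ring, Real.sin_neg]
    rw [heq]
    calc Θ / Real.pi ≤ |θ| / Real.pi := by gcongr
      _ = 2 / Real.pi * (|θ|/2) := by ring
      _ ≤ _ := h
  have habs : ‖Complex.exp (θ * Complex.I) - 1‖ = 2 * |Real.sin (θ/2)| := by
    rw [Complex.norm_def, Complex.normSq_apply]
    simp only [Complex.sub_re, Complex.sub_im, Complex.exp_ofReal_mul_I_re, Complex.exp_ofReal_mul_I_im,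
      Complex.one_re, Complex.one_im]
    have hc : Real.cos θ = 1 - 2 * Real.sin (θ/2)^2 := by
      have := Real.sin_sq_eq_half_sub (θ/2)
      rw [show 2 * (θ/2) = θ by ring] at this
      linarith
    rw [show (Real.cos θ - 1)*(Real.cos θ - 1) + (Real.sin θ - 0)*(Real.sin θ - 0) = 2 - 2*Real.cos θ by
      nlinarith [Real.sin_sq_add_cos_sq θ], hc]
    rw [show 2 - 2*(1 - 2*Real.sin (θ/2)^2) = (2*|Real.sin (θ/2)|)^2 by
      rw [mul_pow, _root_.sq_abs]; ring]
    exact Real.sqrt_sq (by positivity)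
  have hlb : 2 * Θ / Real.pi ≤ ‖Complex.exp (θ * Complex.I) - 1‖ := by
    rw [habs]; rw [div_le_iff₀ Real.pi_pos] at hsin ⊢; nlinarith [hsin]
  have hz : Complex.exp (θ * Complex.I) ≠ 1 := by
    intro h
    rw [h, sub_self, norm_zero] at hlb
    have : 0 < 2 * Θ / Real.pi := by positivity
    linarith
  have hsum : ∑ t ∈ Finset.range T, Complex.exp ((t : ℂ) * (θ : ℂ) * Complex.I)
      = (Complex.exp (θ * Complex.I) ^ T - 1) / (Complex.exp (θ * Complex.I) - 1) := by
    rw [← geom_sum_eq hz]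
    congr 1; ext t
    rw [← Complex.exp_nat_mul]; ring_nf
  rw [hsum, norm_div]
  have hnum : ‖Complex.exp (θ * Complex.I) ^ T - 1‖ ≤ 2 := by
    calc ‖_‖ ≤ ‖Complex.exp (θ * Complex.I) ^ T‖ + ‖(1:ℂ)‖ :=
          norm_sub_le _ _
      _ ≤ 2 := by rw [norm_pow, Complex.norm_exp_ofReal_mul_I]; norm_num
  have hden : 0 < ‖Complex.exp (θ * Complex.I) - 1‖ := by
    have : 0 < 2 * Θ / Real.pi := by positivity
    linarith
  rw [div_le_div_iff₀ hden hΘ]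
  calc ‖Complex.exp (θ * Complex.I) ^ T - 1‖ * Θ ≤ 2 * Θ := by gcongr
    _ = Real.pi * (2 * Θ / Real.pi) := by field_simp
    _ ≤ Real.pi * ‖Complex.exp (θ * Complex.I) - 1‖ := by
        gcongr


/-- Phase estimation error bound: for a unitary `U = Σ_j e^{iθ_j}|λ_j⟩⟨λ_j|` with
eigenphases `θ_j ∈ (−π, π]`, a unit vector `ψ` and `T` steps of phase estimation, the
probability `p = Σ_j |⟨λ_j|ψ⟩|²·|Σ_{t<T} e^{itθ_j}|²/T²` of outcome `0` satisfies
`p ≤ ‖Π_Θ ψ‖² + π²/(T²Θ²)`, where `‖Π_Θ ψ‖² = Σ_{j : |θ_j| ≤ Θ} |⟨λ_j|ψ⟩|²`. -/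
theorem stmt17 {H : Type*} [NormedAddCommGroup H] [InnerProductSpace ℂ H]
    [FiniteDimensional ℂ H]
    (n : ℕ) (lb : OrthonormalBasis (Fin n) ℂ H)
    (U : H →ₗ[ℂ] H) (θ : Fin n → ℝ)
    (hθ : ∀ j, θ j ∈ Set.Ioc (-Real.pi) Real.pi)
    (hUlb : ∀ j, U (lb j) = Complex.exp ((θ j : ℂ) * Complex.I) • lb j)
    (ψ : H) (hψ : ‖ψ‖ = 1)
    (T : ℕ) (hT : 1 ≤ T) (Θ : ℝ) (hΘ : 0 < Θ) (hΘ' : Θ ≤ Real.pi) :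
    ∑ j, Complex.normSq ⟪lb j, ψ⟫ *
        (‖(∑ t ∈ Finset.range T,
          Complex.exp ((t : ℂ) * (θ j : ℂ) * Complex.I))‖) ^ 2 / (T : ℝ) ^ 2
      ≤ (∑ j ∈ Finset.univ.filter (fun j => |θ j| ≤ Θ), Complex.normSq ⟪lb j, ψ⟫)
        + Real.pi ^ 2 / ((T : ℝ) ^ 2 * Θ ^ 2) := by
  have hT0 : (0:ℝ) < (T:ℝ) := by exact_mod_cast hT
  have hT2 : (0:ℝ) < (T:ℝ)^2 := by positivity
  -- Parseval
  have hpars : ∑ j, Complex.normSq ⟪lb j, ψ⟫ = 1 := by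
    have h := lb.sum_inner_mul_inner ψ ψ
    have h2 : ∀ j, ⟪ψ, lb j⟫ * ⟪lb j, ψ⟫ = (Complex.normSq ⟪lb j, ψ⟫ : ℂ) := by
      intro j
      rw [← inner_conj_symm (lb j) ψ, Complex.normSq_eq_conj_mul_self, Complex.conj_conj]
    rw [Finset.sum_congr rfl (fun j _ => h2 j)] at h
    rw [inner_self_eq_norm_sq_to_K, hψ] at h
    have : ((∑ j, Complex.normSq ⟪lb j, ψ⟫ : ℝ) : ℂ) = ((1:ℝ):ℂ) := by
      push_cast
      simpa using h
    exact_mod_cast this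
  rw [← Finset.sum_filter_add_sum_filter_not Finset.univ (fun j => |θ j| ≤ Θ)]
  gcongr ?_ + ?_
  · -- small phases: each term ≤ normSq
    apply Finset.sum_le_sum
    intro j _
    rw [div_le_iff₀ hT2]
    have habs : ‖(∑ t ∈ Finset.range T,
        Complex.exp ((t : ℂ) * (θ j : ℂ) * Complex.I))‖ ≤ (T:ℝ) := by
      calc ‖_‖ ≤ ∑ t ∈ Finset.range T,
            ‖Complex.exp ((t : ℂ) * (θ j : ℂ) * Complex.I)‖ :=
          norm_sum_le _ _
        _ = (T:ℝ) := by
          rw [Finset.sum_congr rfl (fun t _ => ?_), Finset.sum_const, Finset.card_range,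
            nsmul_eq_mul, mul_one]
          rw [show ((t:ℂ) * (θ j : ℂ) * Complex.I) = (((t * θ j : ℝ)):ℂ) * Complex.I by
            push_cast; ring]
          exact Complex.norm_exp_ofReal_mul_I _
    have h0 : (0:ℝ) ≤ Complex.normSq ⟪lb j, ψ⟫ := Complex.normSq_nonneg _
    calc Complex.normSq ⟪lb j, ψ⟫ *
          (‖(∑ t ∈ Finset.range T,
            Complex.exp ((t : ℂ) * (θ j : ℂ) * Complex.I))‖) ^ 2
        ≤ Complex.normSq ⟪lb j, ψ⟫ * (T:ℝ)^2 := by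
          gcongr
      _ = Complex.normSq ⟪lb j, ψ⟫ * (T:ℝ)^2 := rfl
  · -- large phases
    calc ∑ j ∈ Finset.univ.filter (fun j => ¬ |θ j| ≤ Θ),
          Complex.normSq ⟪lb j, ψ⟫ *
            (‖(∑ t ∈ Finset.range T,
              Complex.exp ((t : ℂ) * (θ j : ℂ) * Complex.I))‖) ^ 2 / (T : ℝ) ^ 2
        ≤ ∑ j ∈ Finset.univ.filter (fun j => ¬ |θ j| ≤ Θ),
            Complex.normSq ⟪lb j, ψ⟫ * (Real.pi ^ 2 / ((T : ℝ) ^ 2 * Θ ^ 2)) := by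
          apply Finset.sum_le_sum
          intro j hj
          rw [Finset.mem_filter] at hj
          have hbig : Θ < |θ j| := lt_of_not_ge hj.2
          have hle : |θ j| ≤ Real.pi := by
            rcases hθ j with ⟨h1, h2⟩
            rw [abs_le]; constructor <;> linarith
          have hb := geom_bound (θ j) Θ hΘ hbig hle T
          rw [div_le_iff₀ hT2]
          have h0 : (0:ℝ) ≤ Complex.normSq ⟪lb j, ψ⟫ := Complex.normSq_nonneg _
          calc Complex.normSq ⟪lb j, ψ⟫ *
                (‖(∑ t ∈ Finset.range T,
                  Complex.exp ((t : ℂ) * (θ j : ℂ) * Complex.I))‖) ^ 2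
              ≤ Complex.normSq ⟪lb j, ψ⟫ * (Real.pi / Θ)^2 := by
                gcongr
            _ = Complex.normSq ⟪lb j, ψ⟫ * (Real.pi ^ 2 / ((T : ℝ) ^ 2 * Θ ^ 2)) * (T:ℝ)^2 := by
                field_simp
      _ = (∑ j ∈ Finset.univ.filter (fun j => ¬ |θ j| ≤ Θ),
            Complex.normSq ⟪lb j, ψ⟫) * (Real.pi ^ 2 / ((T : ℝ) ^ 2 * Θ ^ 2)) := by
          rw [← Finset.sum_mul]
      _ ≤ 1 * (Real.pi ^ 2 / ((T : ℝ) ^ 2 * Θ ^ 2)) := by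
          gcongr
          rw [← hpars]
          exact Finset.sum_le_sum_of_subset_of_nonneg (Finset.filter_subset _ _)
              (fun j _ _ => Complex.normSq_nonneg _)
      _ = Real.pi ^ 2 / ((T : ℝ) ^ 2 * Θ ^ 2) := one_mul _
end
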